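/- Let a > 0 and b > 0, and let g : [0,∞) → [0,∞) be differentiable with g'(t) ≤ b − a g(t)^{3/2} for every t ≥ 0. Then for every t ≥ g(0)/(7b), g(t) ≤ 4 (b/a)^{2/3}. -/
import Mathlib


lemma riccati_key (a b : ℝ) (ha : 0 < a) (hb : 0 < b)
    (g g' : ℝ → ℝ)
    (hg_deriv : ∀ t, 0 ≤ t → HasDerivWithinAt g (g' t) (Set.Ici 0) t)
    (hg_ineq : ∀ t, 0 ≤ t → g' t ≤ b - a * g t ^ ((3 : ℝ) / 2))
    (u t : ℝ) (hu : 0 ≤ u) (hut : u ≤ t)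
    (hM : ∀ r ∈ Set.Icc u t, 4 * (b / a) ^ ((2 : ℝ) / 3) ≤ g r) :
    g t + 7 * b * t ≤ g u + 7 * b * u := by
  have hba : (0:ℝ) ≤ b / a := div_nonneg hb.le ha.le
  have hM0 : (0:ℝ) ≤ 4 * (b / a) ^ ((2 : ℝ) / 3) := by positivity
  have hMval : a * (4 * (b / a) ^ ((2 : ℝ) / 3)) ^ ((3 : ℝ) / 2) = 8 * b := by
    have h1 : ((4:ℝ) * (b/a) ^ ((2:ℝ)/3)) ^ ((3:ℝ)/2)
        = (4:ℝ) ^ ((3:ℝ)/2) * ((b/a) ^ ((2:ℝ)/3)) ^ ((3:ℝ)/2) :=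
      Real.mul_rpow (by norm_num) (Real.rpow_nonneg hba _)
    have h2 : ((b/a) ^ ((2:ℝ)/3)) ^ ((3:ℝ)/2) = b / a := by
      rw [← Real.rpow_mul hba]
      norm_num
    have h3 : (4:ℝ) ^ ((3:ℝ)/2) = 8 := by
      have : (4:ℝ) = (2:ℝ) ^ (2:ℝ) := by
        rw [show (2:ℝ) = ((2:ℕ):ℝ) from by norm_num, Real.rpow_natCast]; norm_num
      rw [this, ← Real.rpow_mul (by norm_num : (0:ℝ) ≤ 2)]
      rw [show (2:ℝ) * (3/2) = ((3:ℕ):ℝ) from by norm_num, Real.rpow_natCast]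
      norm_num
    rw [h1, h2, h3]
    field_simp
  set f : ℝ → ℝ := fun r => g r + 7 * b * r with hf
  have hsub : Set.Icc u t ⊆ Set.Ici (0:ℝ) := fun x hx => le_trans hu hx.1
  have hcont : ContinuousOn f (Set.Icc u t) := by
    apply ContinuousOn.add
    · exact fun x hx => ((hg_deriv x (hsub hx)).continuousWithinAt).mono hsub
    · exact (continuous_const.mul continuous_id).continuousOn
  have hderiv : ∀ x ∈ interior (Set.Icc u t), HasDerivAt f (g' x + 7 * b) x := by
    intro x hx
    rw [interior_Icc] at hx
    have hx0 : 0 < x := lt_of_le_of_lt hu hx.1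
    have hg := (hg_deriv x hx0.le).hasDerivAt (Ici_mem_nhds hx0)
    have hlin : HasDerivAt (fun r : ℝ => 7 * b * r) (7 * b) x := by
      simpa using (hasDerivAt_id x).const_mul (7 * b)
    exact hg.add hlin
  have hanti : AntitoneOn f (Set.Icc u t) := by
    apply antitoneOn_of_deriv_nonpos (convex_Icc u t) hcont
    · intro x hx
      exact (hderiv x hx).differentiableAt.differentiableWithinAt
    · intro x hx
      rw [(hderiv x hx).deriv]
      rw [interior_Icc] at hx
      have hx0 : 0 ≤ x := le_trans hu hx.1.le
      have h1 := hg_ineq x hx0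
      have h2 : a * (4 * (b / a) ^ ((2 : ℝ) / 3)) ^ ((3 : ℝ) / 2)
          ≤ a * g x ^ ((3 : ℝ) / 2) := by
        apply mul_le_mul_of_nonneg_left _ ha.le
        exact Real.rpow_le_rpow hM0 (hM x ⟨hx.1.le, hx.2.le⟩) (by norm_num)
      rw [hMval] at h2
      linarith
  have := hanti ⟨le_refl u, hut⟩ ⟨hut, le_refl t⟩ hut
  simpa [hf] using this

/-- If `g : [0,∞) → [0,∞)` is differentiable and satisfies the Riccati-type
differential inequality `g'(t) ≤ b - a g(t)^{3/2}` for all `t ≥ 0` (with `a, b > 0`), then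
for every `t ≥ g(0)/(7b)` one has `g(t) ≤ 4 (b/a)^{2/3}`. -/
theorem riccati_absorbing (a b : ℝ) (ha : 0 < a) (hb : 0 < b)
    (g g' : ℝ → ℝ)
    (hg_nonneg : ∀ t, 0 ≤ t → 0 ≤ g t)
    (hg_deriv : ∀ t, 0 ≤ t → HasDerivWithinAt g (g' t) (Set.Ici 0) t)
    (hg_ineq : ∀ t, 0 ≤ t → g' t ≤ b - a * g t ^ ((3 : ℝ) / 2)) :
    ∀ t, g 0 / (7 * b) ≤ t → g t ≤ 4 * (b / a) ^ ((2 : ℝ) / 3) := by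
  intro t ht
  have hg0 := hg_nonneg 0 le_rfl
  have hb7 : (0:ℝ) < 7 * b := by linarith
  have ht0 : 0 ≤ t := le_trans (div_nonneg hg0 hb7.le) ht
  set M : ℝ := 4 * (b / a) ^ ((2 : ℝ) / 3) with hMdef
  have hM0 : 0 < M := by positivity
  by_contra hcon
  push_neg at hcon
  set S : Set ℝ := Set.Icc 0 t ∩ g ⁻¹' Set.Iic M with hS
  have hgc : ContinuousOn g (Set.Icc 0 t) :=
    fun x hx => ((hg_deriv x hx.1).continuousWithinAt).mono (fun y hy => hy.1)
  have hScl : IsClosed S := hgc.preimage_isClosed_of_isClosed isClosed_Icc isClosed_Iic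
  by_cases hne : S.Nonempty
  · set u := sSup S with hu
    have hbdd : BddAbove S := ⟨t, fun r hr => hr.1.2⟩
    have huS : u ∈ S := hScl.csSup_mem hne hbdd
    have hu0 : 0 ≤ u := huS.1.1
    have hut : u ≤ t := huS.1.2
    have htS : t ∉ S := fun h => absurd h.2 (not_le.mpr hcon)
    have hult : u < t := lt_of_le_of_ne hut (fun h => htS (h ▸ huS))
    have hgtM : ∀ r, u < r → r ≤ t → M < g r := by
      intro r hr1 hr2
      by_contra h
      push_neg at h
      exact absurd (le_csSup hbdd ⟨⟨le_trans hu0 hr1.le, hr2⟩, h⟩) (not_le.mpr hr1)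
    have hgu : M ≤ g u := by
      have hten : Filter.Tendsto g (nhdsWithin u (Set.Ioi u)) (nhds (g u)) :=
        ((hg_deriv u hu0).continuousWithinAt).mono
          (fun y (hy : y ∈ Set.Ioi u) => le_trans hu0 (le_of_lt hy))
      have hev : ∀ᶠ r in nhdsWithin u (Set.Ioi u), M ≤ g r := by
        filter_upwards [Ioc_mem_nhdsGT_of_mem ⟨le_refl u, hult⟩] with r hr
        exact (hgtM r hr.1 hr.2).le
      exact ge_of_tendsto hten hev
    have hkey := riccati_key a b ha hb g g' hg_deriv hg_ineq u t hu0 hut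
      (fun r hr => by
        rcases eq_or_lt_of_le hr.1 with h | h
        · exact h ▸ hgu
        · exact (hgtM r h hr.2).le)
    have h7 : 7 * b * u ≤ 7 * b * t := by nlinarith
    have hguM : g u ≤ M := huS.2
    linarith
  · have hall : ∀ r ∈ Set.Icc 0 t, M ≤ g r := by
      intro r hr
      by_contra h
      push_neg at h
      exact hne ⟨r, hr, h.le⟩
    have hkey := riccati_key a b ha hb g g' hg_deriv hg_ineq 0 t le_rfl ht0 hall
    have hg0le : g 0 ≤ t * (7 * b) := (div_le_iff₀ hb7).mp ht
    have hgt0 := hg_nonneg t ht0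
    nlinarith
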